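/- For integers v, k ≥ 2, if an orthogonal array OA(2, k, v) exists, then CAN_X(2, k, v) = v(v+1). -/

import Mathlib

/-- A permutation `π` of `[v]` covers a sequence `s` of distinct elements if the
elements appear in order in `π`, i.e. `π⁻¹(s i) < π⁻¹(s j)` for `i < j`. -/
def SeqCovers {v t : ℕ} (π : Equiv.Perm (Fin v)) (s : Fin t → Fin v) : Prop :=
  ∀ i j : Fin t, i < j → π.symm (s i) < π.symm (s j)

instance {v t : ℕ} (s : Fin t → Fin v) :
    DecidablePred fun π : Equiv.Perm (Fin v) => SeqCovers π s := fun π => by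
  unfold SeqCovers; infer_instance

/-- `X` is a sequence covering array SCA(N; t, v): a set of `N` permutations of `[v]`
such that every sequence of `t` distinct elements of `[v]` is covered by at least one. -/
def IsSCA (N t v : ℕ) (X : Finset (Equiv.Perm (Fin v))) : Prop :=
  X.card = N ∧ ∀ s : Fin t → Fin v, Function.Injective s → ∃ π ∈ X, SeqCovers π s

/-- `μ(T)` for a `t`-way interaction with symbol vector `ν`: the product over symbols `σ`
of `|τ_σ(T)|!` where `τ_σ(T)` is the set of positions carrying symbol `σ`. -/
def mu {w t : ℕ} (ν : Fin t → Fin w) : ℕ :=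
  ∏ σ : Fin w, Nat.factorial (Finset.univ.filter fun i => ν i = σ).card

/-- The number of rows of `C` covering the interaction given by distinct columns `c i`
and symbols `ν i`. -/
def CoversCount {κ : Type} {w t : ℕ}
    (C : Multiset (κ → Fin w)) (c : Fin t → κ) (ν : Fin t → Fin w) : ℕ :=
  C.countP fun ρ => ∀ i, ρ (c i) = ν i

/-- `C` is an excess coverage array CA_X(N; t, k, v): an `N × k` array (multiset of rows)
over `[v]` in which every `t`-way interaction `T` is covered by at least `μ(T)` rows. -/
def IsCAX (N t k v : ℕ) (C : Multiset (Fin k → Fin v)) : Prop :=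
  Multiset.card C = N ∧
  ∀ c : Fin t → Fin k, Function.Injective c →
    ∀ ν : Fin t → Fin v, mu ν ≤ CoversCount C c ν

/-- `C` is a (strength 2) orthogonal array OA(2, k, v): a `v² × k` array over `[v]` in
which every 2-way interaction is covered by exactly one row. -/
def IsOA2 (k v : ℕ) (C : Multiset (Fin k → Fin v)) : Prop :=
  Multiset.card C = v ^ 2 ∧
  ∀ c : Fin 2 → Fin k, Function.Injective c →
    ∀ ν : Fin 2 → Fin v, CoversCount C c ν = 1

/-- `C` is a covering array CA(N; t, k, v): every `t`-way interaction is covered by at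
least one row. -/
def IsCA (N t k v : ℕ) (C : Multiset (Fin k → Fin v)) : Prop :=
  Multiset.card C = N ∧
  ∀ c : Fin t → Fin k, Function.Injective c →
    ∀ ν : Fin t → Fin v, 1 ≤ CoversCount C c ν

/-- `CAN(t, k, v)`: the smallest `N` for which a CA(N; t, k, v) exists. -/
noncomputable def CAN (t k v : ℕ) : ℕ :=
  sInf {N | ∃ C : Multiset (Fin k → Fin v), IsCA N t k v C}

/-- `CAN_X(t, k, v)`: the smallest `N` for which a CA_X(N; t, k, v) exists. -/
noncomputable def CANX (t k v : ℕ) : ℕ :=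
  sInf {N | ∃ C : Multiset (Fin k → Fin v), IsCAX N t k v C}

section Aux

variable {k v : ℕ}

lemma mu_two (ν : Fin 2 → Fin v) : mu ν = if ν 0 = ν 1 then 2 else 1 := by
  unfold mu
  have hcard : ∀ σ : Fin v, (Finset.univ.filter fun i : Fin 2 => ν i = σ).card
      = (if ν 0 = σ then 1 else 0) + (if ν 1 = σ then 1 else 0) := by
    intro σ
    rw [Finset.card_filter, Fin.sum_univ_two]
  by_cases h : ν 0 = ν 1
  · rw [if_pos h]
    calc (∏ σ : Fin v, Nat.factorial (Finset.univ.filter fun i : Fin 2 => ν i = σ).card)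
        = ∏ σ : Fin v, (if ν 1 = σ then 2 else 1) := by
          refine Finset.prod_congr rfl fun σ _ => ?_
          rw [hcard, h]
          by_cases hs : ν 1 = σ <;> simp [hs]
      _ = 2 := by rw [Finset.prod_ite_eq]; simp
  · rw [if_neg h]
    refine Finset.prod_eq_one fun σ _ => ?_
    rw [hcard]
    by_cases h0 : ν 0 = σ <;> by_cases h1 : ν 1 = σ <;>
      simp_all [Nat.factorial]

lemma card_eq_sum_covers (C : Multiset (Fin k → Fin v)) (c : Fin 2 → Fin k) :
    ∑ p : Fin v × Fin v, CoversCount C c ![p.1, p.2] = Multiset.card C := by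
  induction C using Multiset.induction with
  | empty => simp [CoversCount]
  | cons a s ih =>
    have hstep : ∀ p : Fin v × Fin v, CoversCount (a ::ₘ s) c ![p.1, p.2]
        = CoversCount s c ![p.1, p.2]
          + if p = (a (c 0), a (c 1)) then 1 else 0 := by
      intro p
      simp only [CoversCount, Multiset.countP_cons]
      congr 1
      by_cases hp : p = (a (c 0), a (c 1))
      · rw [if_pos hp, if_pos]
        intro i
        subst hp
        fin_cases i <;> simp
      · rw [if_neg hp, if_neg]
        intro hall
        exact hp (Prod.ext (hall 0).symm (hall 1).symm)
    rw [Finset.sum_congr rfl fun p _ => hstep p, Finset.sum_add_distrib, ih,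
      Finset.sum_ite_eq' Finset.univ]
    simp

lemma lower_bound (N : ℕ) (hk : 2 ≤ k) (C : Multiset (Fin k → Fin v))
    (hC : IsCAX N 2 k v C) : v * (v + 1) ≤ N := by
  obtain ⟨hcard, hcov⟩ := hC
  set c : Fin 2 → Fin k := ![⟨0, by omega⟩, ⟨1, by omega⟩] with hc
  have hinj : Function.Injective c := by
    intro i j hij
    fin_cases i <;> fin_cases j <;> simp_all [c]
  have h2 : ∑ p : Fin v × Fin v, mu ![p.1, p.2] ≤ Multiset.card C := by
    rw [← card_eq_sum_covers C c]
    exact Finset.sum_le_sum fun p _ => hcov c hinj _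
  have h3 : ∑ p : Fin v × Fin v, mu ![p.1, p.2] = v * (v + 1) := by
    have hmu : ∀ p : Fin v × Fin v, mu ![p.1, p.2] = if p.1 = p.2 then 2 else 1 := by
      intro p; rw [mu_two]; simp
    rw [Finset.sum_congr rfl fun p _ => hmu p, Fintype.sum_prod_type]
    have inner : ∀ a : Fin v, (∑ b : Fin v, if a = b then 2 else 1) = v + 1 := by
      intro a
      have hb : ∀ b : Fin v, (if a = b then (2 : ℕ) else 1)
          = 1 + (if a = b then 1 else 0) := by
        intro b; by_cases h : a = b <;> simp [h]
      rw [Finset.sum_congr rfl fun b _ => hb b, Finset.sum_add_distrib,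
        Finset.sum_ite_eq]
      simp [add_comm]
    rw [Finset.sum_congr rfl fun a _ => inner a]
    simp [mul_comm]
  omega

lemma upper_bound (h : ∃ C : Multiset (Fin k → Fin v), IsOA2 k v C) :
    ∃ D : Multiset (Fin k → Fin v), IsCAX (v * (v + 1)) 2 k v D := by
  obtain ⟨C, hCcard, hC⟩ := h
  set M : Multiset (Fin k → Fin v) :=
    Finset.univ.val.map (fun a : Fin v => fun _ : Fin k => a) with hM
  refine ⟨C + M, ?_, ?_⟩
  · simp only [Multiset.card_add, hCcard, hM, Multiset.card_map]
    simp; ring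
  · intro c hinj ν
    have hsplit : CoversCount (C + M) c ν = CoversCount C c ν + CoversCount M c ν :=
      Multiset.countP_add _ _ _
    rw [hsplit, hC c hinj ν, mu_two]
    by_cases hν : ν 0 = ν 1
    · rw [if_pos hν]
      have : 1 ≤ CoversCount M c ν := by
        have hmem : (fun _ : Fin k => ν 0) ∈ M :=
          Multiset.mem_map.2 ⟨ν 0, Finset.mem_def.1 (Finset.mem_univ _), rfl⟩
        have : 0 < Multiset.countP (fun ρ : Fin k → Fin v => ∀ i, ρ (c i) = ν i) M := by
          rw [Multiset.countP_pos]
          exact ⟨_, hmem, fun i => by fin_cases i <;> simp [hν]⟩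
        exact this
      omega
    · rw [if_neg hν]; omega

end Aux

/-- For `v, k ≥ 2`, if an OA(2, k, v) exists then
`CAN_X(2, k, v) = v(v+1)`. -/
theorem canx_eq_of_oa_exists (v k : ℕ) (hv : 2 ≤ v) (hk : 2 ≤ k)
    (h : ∃ C : Multiset (Fin k → Fin v), IsOA2 k v C) :
    CANX 2 k v = v * (v + 1) := by
  obtain ⟨D, hD⟩ := upper_bound h
  refine le_antisymm (Nat.sInf_le ⟨D, hD⟩) (le_csInf ⟨_, D, hD⟩ ?_)
  rintro N ⟨C, hC⟩
  exact lower_bound N hk C hC
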